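/- If a handle sequence from a knot to a knot satisfies Property A, then it admits a full and regular twist function f with f(Λ₊) = 1. -/

import Mathlib

/-! Combinatorial handle sequences underlying decomposable Lagrangian cobordisms, and
twist functions on them. -/

/-- An isotopy move from level `A` to level `B`: a bijection of components. -/
structure IsotopyMove (A B : Type) where
  e : A ≃ B

/-- A 0-handle move: a distinguished born component of `B`, together with a bijection
from `A` onto the complement of the born component. -/
structure ZeroHandleMove (A B : Type) where
  born : B
  e : A ≃ {x : B // x ≠ born}

/-- A ∧-handle move: two distinct base components of `A` are joined into a single result
component of `B`, together with a bijection between the remaining components. -/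
structure WedgeMove (A B : Type) where
  base1 : A
  base2 : A
  base_ne : base1 ≠ base2
  result : B
  e : {a : A // a ≠ base1 ∧ a ≠ base2} ≃ {x : B // x ≠ result}

/-- A ∨-handle move: a base component of `A` is split into two distinct result components
of `B`, together with a bijection between the remaining components. -/
structure VeeMove (A B : Type) where
  base : A
  result1 : B
  result2 : B
  result_ne : result1 ≠ result2
  e : {a : A // a ≠ base} ≃ {x : B // x ≠ result1 ∧ x ≠ result2}

/-- An elementary move between two consecutive levels of a handle sequence. -/
inductive Move (A B : Type) where
  | isotopy : IsotopyMove A B → Move A B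
  | zero : ZeroHandleMove A B → Move A B
  | wedge : WedgeMove A B → Move A B
  | vee : VeeMove A B → Move A B

/-- The relation `R ⊆ A × B` determined by an elementary move. -/
def Move.rel {A B : Type} : Move A B → A → B → Prop
  | .isotopy m, a, b => m.e a = b
  | .zero m, a, b => (m.e a : B) = b
  | .wedge m, a, b => ((a = m.base1 ∨ a = m.base2) ∧ b = m.result) ∨
      ∃ h : a ≠ m.base1 ∧ a ≠ m.base2, (m.e ⟨a, h⟩ : B) = b
  | .vee m, a, b => (a = m.base ∧ (b = m.result1 ∨ b = m.result2)) ∨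
      ∃ h : a ≠ m.base, (m.e ⟨a, h⟩ : B) = b

/-- `Move.isIsotopy M` holds exactly when `M` is an isotopy move. -/
def Move.isIsotopy {A B : Type} : Move A B → Prop
  | .isotopy _ => True
  | _ => False

/-- `Move.isZeroHandle M` holds exactly when `M` is a 0-handle move. -/
def Move.isZeroHandle {A B : Type} : Move A B → Prop
  | .zero _ => True
  | _ => False

/-- `Move.isWedge M` holds exactly when `M` is a ∧-handle move. -/
def Move.isWedge {A B : Type} : Move A B → Prop
  | .wedge _ => True
  | _ => False

/-- `Move.isVee M` holds exactly when `M` is a ∨-handle move. -/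
def Move.isVee {A B : Type} : Move A B → Prop
  | .vee _ => True
  | _ => False

/-- Count (0 or 1) of 1-handles (∧- or ∨-handles) among a single move. -/
def Move.oneCount {A B : Type} : Move A B → ℕ
  | .wedge _ => 1
  | .vee _ => 1
  | _ => 0

/-- Count (0 or 1) of 0-handles among a single move. -/
def Move.zeroCount {A B : Type} : Move A B → ℕ
  | .zero _ => 1
  | _ => 0

/-- Count (0 or 1) of ∧-handles among a single move. -/
def Move.wedgeCount {A B : Type} : Move A B → ℕ
  | .wedge _ => 1
  | _ => 0

/-- Count (0 or 1) of ∨-handles among a single move. -/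
def Move.veeCount {A B : Type} : Move A B → ℕ
  | .vee _ => 1
  | _ => 0

/-- The value of `fB` on the born component if the move is a 0-handle, and `0` otherwise. -/
def Move.bornValue {A B : Type} (fB : B → ℚ) : Move A B → ℚ
  | .zero m => fB m.born
  | _ => 0

/-- A handle sequence of length `m`: finite sets of components `C 0, …, C m` connected by
elementary moves. -/
structure HandleSequence where
  m : ℕ
  C : ℕ → Type
  finite : ∀ k, Finite (C k)
  move : (k : Fin m) → Move (C k.val) (C (k.val + 1))

/-- The conditions a twist function must satisfy across a single elementary move. -/
def MoveTwistOK {A B : Type} (fA : A → ℚ) (fB : B → ℚ) : Move A B → Prop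
  | .isotopy m => ∀ a, fA a = fB (m.e a)
  | .zero m => 1 ≤ fB m.born ∧ ∀ a, fA a = fB (m.e a : B)
  | .wedge m => (1 / 2 : ℚ) ≤ fA m.base1 ∧ (1 / 2 : ℚ) ≤ fA m.base2 ∧
      fA m.base1 + fA m.base2 = fB m.result + 1 ∧
      ∀ a (h : a ≠ m.base1 ∧ a ≠ m.base2), fA a = fB (m.e ⟨a, h⟩ : B)
  | .vee m => 1 ≤ fA m.base ∧ fA m.base = fB m.result1 + fB m.result2 + 1 ∧
      ∀ a (h : a ≠ m.base), fA a = fB (m.e ⟨a, h⟩ : B)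

/-- A twist function on a handle sequence: a `½ℕ`-valued function on all components
satisfying the twist conditions across every elementary move. -/
def IsTwistFunction (H : HandleSequence) (f : ∀ k, H.C k → ℚ) : Prop :=
  (∀ k (x : H.C k), ∃ j : ℕ, f k x = (j : ℚ) / 2) ∧
    ∀ k : Fin H.m, MoveTwistOK (f k.val) (f (k.val + 1)) (H.move k)

/-- A twist function is full if all its values are integers and its value on the base of
every ∨-handle is at least 2. -/
def IsFullTwist (H : HandleSequence) (f : ∀ k, H.C k → ℚ) : Prop :=
  (∀ k (x : H.C k), ∃ j : ℕ, f k x = (j : ℚ)) ∧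
    ∀ (k : Fin H.m) (mv : VeeMove (H.C k.val) (H.C (k.val + 1))),
      H.move k = Move.vee mv → 2 ≤ f k.val mv.base

/-- A twist function is regular if its value on the born component of every 0-handle is 1. -/
def IsRegularTwist (H : HandleSequence) (f : ∀ k, H.C k → ℚ) : Prop :=
  ∀ (k : Fin H.m) (mv : ZeroHandleMove (H.C k.val) (H.C (k.val + 1))),
    H.move k = Move.zero mv → f (k.val + 1) mv.born = 1

/-- `ReachesBottom H k x` holds when there is a downward vertical path in the handle sequence
from the component `x ∈ C k` to a component of `C 0`. -/
inductive ReachesBottom (H : HandleSequence) : (k : ℕ) → H.C k → Prop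
  | base (x : H.C 0) : ReachesBottom H 0 x
  | step (k : Fin H.m) (x : H.C k.val) (y : H.C (k.val + 1)) :
      ReachesBottom H k.val x → (H.move k).rel x y → ReachesBottom H (k.val + 1) y

/-- Property A: the base of every ∨-handle admits a downward vertical path ending at the
bottom level `C 0`. -/
def PropertyA (H : HandleSequence) : Prop :=
  ∀ (k : Fin H.m) (mv : VeeMove (H.C k.val) (H.C (k.val + 1))),
    H.move k = Move.vee mv → ReachesBottom H k.val mv.base

namespace TwistAux

variable {H : HandleSequence}

/-- `p` is a downward vertical path defined on levels `0, …, k`. -/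
def IsPath (H : HandleSequence) (k : ℕ) (p : ∀ j, j ≤ k → H.C j) : Prop :=
  ∀ (j : ℕ) (hj : j < H.m) (h : j + 1 ≤ k),
    (H.move ⟨j, hj⟩).rel (p j (Nat.le_of_succ_le h)) (p (j + 1) h)

lemma reach_path {k : ℕ} {x : H.C k} (h : ReachesBottom H k x) :
    ∃ p : ∀ j, j ≤ k → H.C j, IsPath H k p ∧ p k le_rfl = x := by
  induction h with
  | base x =>
    refine ⟨fun j hj => (Nat.le_zero.mp hj).symm ▸ x, ?_, rfl⟩
    intro j hj h
    omega
  | step k x y hx hrel ih =>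
    obtain ⟨p, hp, htop⟩ := ih
    refine ⟨fun j hj => if h' : j ≤ k.val then p j h'
        else (show k.val + 1 = j by omega) ▸ y, ?_, ?_⟩
    · intro j hj h
      by_cases h1 : j + 1 ≤ k.val
      · have h0 : j ≤ k.val := Nat.le_of_succ_le h1
        simp only [dif_pos h1, dif_pos h0]
        exact hp j hj h1
      · have hj_eq : j = k.val := by omega
        subst hj_eq
        simp only [dif_pos (le_refl k.val), dif_neg (by omega : ¬ k.val + 1 ≤ k.val)]
        have hx' : p k.val (le_refl k.val) = x := htop
        rw [hx']
        exact hrel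
    · simp only [dif_neg (by omega : ¬ k.val + 1 ≤ k.val)]

/-- The move at index `t` is a ∨-handle. -/
def IsVeeAt (H : HandleSequence) (t : Fin H.m) : Prop :=
  ∃ mv, H.move t = Move.vee mv

lemma exists_goodpath (hA : PropertyA H) (t : Fin H.m) (hv : IsVeeAt H t) :
    ∃ p : ∀ j, j ≤ t.val → H.C j, IsPath H t.val p ∧
      ∀ mv, H.move t = Move.vee mv → p t.val le_rfl = mv.base := by
  obtain ⟨mv, hm⟩ := hv
  obtain ⟨p, hp, htop⟩ := reach_path (hA t mv hm)
  refine ⟨p, hp, fun mv' hm' => ?_⟩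
  have hmm := hm.symm.trans hm'
  injection hmm with hmm
  rw [← hmm]
  exact htop

/-- The chosen downward path from the base of the ∨-handle at index `t`. -/
noncomputable def cp (hA : PropertyA H) (t : Fin H.m) (hv : IsVeeAt H t) :
    ∀ j, j ≤ t.val → H.C j :=
  (exists_goodpath hA t hv).choose

lemma cp_isPath (hA : PropertyA H) (t : Fin H.m) (hv : IsVeeAt H t) :
    IsPath H t.val (cp hA t hv) :=
  (exists_goodpath hA t hv).choose_spec.1

lemma cp_top (hA : PropertyA H) (t : Fin H.m) (hv : IsVeeAt H t)
    (mv : VeeMove (H.C t.val) (H.C (t.val + 1))) (hm : H.move t = Move.vee mv) :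
    cp hA t hv t.val le_rfl = mv.base :=
  (exists_goodpath hA t hv).choose_spec.2 mv hm

/-- `S hA t j x`: the chosen path of the ∨-handle at index `t` passes through `x` at
level `j`. -/
def S (hA : PropertyA H) (t : Fin H.m) (j : ℕ) (x : H.C j) : Prop :=
  ∃ (hv : IsVeeAt H t) (hj : j ≤ t.val), cp hA t hv j hj = x

variable (hA : PropertyA H)

lemma S_fun {t : Fin H.m} {j : ℕ} {x x' : H.C j}
    (h : S hA t j x) (h' : S hA t j x') : x = x' := by
  obtain ⟨hv, hj, hp⟩ := h
  obtain ⟨hv', hj', hp'⟩ := h'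
  exact hp.symm.trans hp' 

lemma S_le {t : Fin H.m} {j : ℕ} {x : H.C j} (h : S hA t j x) : j ≤ t.val := by
  obtain ⟨hv, hj, -⟩ := h
  exact hj

lemma S_down {t k : Fin H.m} {y : H.C (k.val + 1)} (h : S hA t (k.val + 1) y) :
    ∃ x : H.C k.val, (H.move k).rel x y ∧ S hA t k.val x := by
  obtain ⟨hv, hj, hp⟩ := h
  refine ⟨cp hA t hv k.val (by omega), ?_, hv, by omega, rfl⟩
  have hrel := cp_isPath hA t hv k.val k.isLt hj
  rw [hp] at hrel
  exact hrel

lemma S_up {t k : Fin H.m} {x : H.C k.val} (h : S hA t k.val x) (hlt : k.val < t.val) :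
    ∃ y : H.C (k.val + 1), (H.move k).rel x y ∧ S hA t (k.val + 1) y := by
  obtain ⟨hv, hj, hp⟩ := h
  refine ⟨cp hA t hv (k.val + 1) hlt, ?_, hv, hlt, rfl⟩
  have hrel := cp_isPath hA t hv k.val k.isLt hlt
  have hx : cp hA t hv k.val (Nat.le_of_succ_le hlt) = x := hp
  rw [hx] at hrel
  exact hrel

lemma S_top {t : Fin H.m} {x : H.C t.val} (h : S hA t t.val x) :
    ∃ mv, H.move t = Move.vee mv ∧ x = mv.base := by
  obtain ⟨hv, hj, hp⟩ := h
  have hv2 := hv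
  obtain ⟨mv, hm⟩ := hv2
  refine ⟨mv, hm, ?_⟩
  have h2 : cp hA t hv t.val le_rfl = mv.base := cp_top hA t hv mv hm
  have hp' : cp hA t hv t.val le_rfl = x := hp
  exact hp'.symm.trans h2

lemma S_self (t : Fin H.m) (mv : VeeMove (H.C t.val) (H.C (t.val + 1)))
    (hm : H.move t = Move.vee mv) : S hA t t.val mv.base :=
  ⟨⟨mv, hm⟩, le_rfl, cp_top hA t ⟨mv, hm⟩ mv hm⟩

open Classical in
/-- The set of ∨-handles whose chosen path passes through `x`. -/
noncomputable def NS (hA : PropertyA H) (j : ℕ) (x : H.C j) : Finset (Fin H.m) :=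
  Finset.univ.filter (fun t => S hA t j x)

lemma mem_NS {j : ℕ} {x : H.C j} {t : Fin H.m} : t ∈ NS hA j x ↔ S hA t j x := by
  simp [NS]

/-- The twist function. -/
noncomputable def f (hA : PropertyA H) (j : ℕ) (x : H.C j) : ℚ :=
  1 + 2 * ((NS hA j x).card : ℚ)

lemma one_le_f (j : ℕ) (x : H.C j) : 1 ≤ f hA j x := by
  have : (0 : ℚ) ≤ ((NS hA j x).card : ℚ) := Nat.cast_nonneg _
  unfold f
  linarith

lemma NS_pair (k : Fin H.m) (x : H.C k.val) (y : H.C (k.val + 1))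
    (hpred : ∀ x', (H.move k).rel x' y → x' = x)
    (hsucc : ∀ y', (H.move k).rel x y' → y' = y)
    (hnb : ∀ mv, H.move k = Move.vee mv → x ≠ mv.base) :
    NS hA k.val x = NS hA (k.val + 1) y := by
  ext t
  simp only [mem_NS]
  constructor
  · intro h
    have hk : k.val ≤ t.val := S_le hA h
    rcases eq_or_lt_of_le hk with heq | hlt
    · exfalso
      have ht : t = k := (Fin.ext heq).symm
      subst ht
      obtain ⟨mv, hm, hxb⟩ := S_top hA h
      exact hnb mv hm hxb
    · obtain ⟨y', hrel, hS⟩ := S_up hA h hlt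
      rwa [hsucc y' hrel] at hS
  · intro h
    obtain ⟨x', hrel, hS⟩ := S_down hA h
    rwa [hpred x' hrel] at hS

lemma f_pair (k : Fin H.m) (x : H.C k.val) (y : H.C (k.val + 1))
    (hpred : ∀ x', (H.move k).rel x' y → x' = x)
    (hsucc : ∀ y', (H.move k).rel x y' → y' = y)
    (hnb : ∀ mv, H.move k = Move.vee mv → x ≠ mv.base) :
    f hA k.val x = f hA (k.val + 1) y := by
  unfold f
  rw [NS_pair hA k x y hpred hsucc hnb]

lemma NS_born (k : Fin H.m) (mz : ZeroHandleMove (H.C k.val) (H.C (k.val + 1)))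
    (h : H.move k = Move.zero mz) : NS hA (k.val + 1) mz.born = ∅ := by
  rw [Finset.eq_empty_iff_forall_notMem]
  intro t ht
  rw [mem_NS] at ht
  obtain ⟨x', hrel, -⟩ := S_down hA ht
  rw [h] at hrel
  exact (mz.e x').2 hrel

lemma f_born (k : Fin H.m) (mz : ZeroHandleMove (H.C k.val) (H.C (k.val + 1)))
    (h : H.move k = Move.zero mz) : f hA (k.val + 1) mz.born = 1 := by
  unfold f
  rw [NS_born hA k mz h]
  simp

lemma NS_wedge (k : Fin H.m) (mw : WedgeMove (H.C k.val) (H.C (k.val + 1)))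
    (h : H.move k = Move.wedge mw) :
    NS hA (k.val + 1) mw.result = NS hA k.val mw.base1 ∪ NS hA k.val mw.base2 := by
  classical
  have step : ∀ a : H.C k.val, (a = mw.base1 ∨ a = mw.base2) →
      ∀ t, S hA t k.val a → S hA t (k.val + 1) mw.result := by
    intro a hab t hS
    have hk : k.val ≤ t.val := S_le hA hS
    rcases eq_or_lt_of_le hk with heq | hlt
    · exfalso
      have ht : t = k := (Fin.ext heq).symm
      subst ht
      obtain ⟨mv, hm, -⟩ := S_top hA hS
      rw [h] at hm
      cases hm
    · obtain ⟨y', hrel, hS'⟩ := S_up hA hS hlt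
      rw [h] at hrel
      rcases hrel with ⟨-, hy⟩ | ⟨h', -⟩
      · rwa [← hy]
      · rcases hab with hh | hh
        · exact absurd hh h'.1
        · exact absurd hh h'.2
  ext t
  simp only [mem_NS, Finset.mem_union]
  constructor
  · intro hS
    obtain ⟨x', hrel, hS'⟩ := S_down hA hS
    rw [h] at hrel
    rcases hrel with ⟨hx, -⟩ | ⟨h', he⟩
    · rcases hx with rfl | rfl
      · exact Or.inl hS'
      · exact Or.inr hS'
    · exact absurd he (mw.e ⟨x', h'⟩).2
  · intro hS
    rcases hS with hS | hS
    · exact step mw.base1 (Or.inl rfl) t hS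
    · exact step mw.base2 (Or.inr rfl) t hS

lemma NS_wedge_disj (k : Fin H.m) (mw : WedgeMove (H.C k.val) (H.C (k.val + 1))) :
    Disjoint (NS hA k.val mw.base1) (NS hA k.val mw.base2) := by
  rw [Finset.disjoint_left]
  intro t h1 h2
  rw [mem_NS] at h1 h2
  exact mw.base_ne (S_fun hA h1 h2)

lemma NS_wedge_card (k : Fin H.m) (mw : WedgeMove (H.C k.val) (H.C (k.val + 1)))
    (h : H.move k = Move.wedge mw) :
    (NS hA (k.val + 1) mw.result).card
      = (NS hA k.val mw.base1).card + (NS hA k.val mw.base2).card := by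
  classical
  rw [NS_wedge hA k mw h]
  exact Finset.card_union_of_disjoint (NS_wedge_disj hA k mw)

lemma NS_vee (k : Fin H.m) (mvv : VeeMove (H.C k.val) (H.C (k.val + 1)))
    (h : H.move k = Move.vee mvv) :
    NS hA k.val mvv.base =
      insert k (NS hA (k.val + 1) mvv.result1 ∪ NS hA (k.val + 1) mvv.result2) := by
  classical
  ext t
  simp only [mem_NS, Finset.mem_insert, Finset.mem_union]
  constructor
  · intro hS
    by_cases ht : t = k
    · exact Or.inl ht
    · have hk : k.val ≤ t.val := S_le hA hS
      have hlt : k.val < t.val := lt_of_le_of_ne hk (fun hh => ht (Fin.ext hh.symm))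
      obtain ⟨y', hrel, hS'⟩ := S_up hA hS hlt
      rw [h] at hrel
      rcases hrel with ⟨-, hy⟩ | ⟨h', -⟩
      · rcases hy with rfl | rfl
        · exact Or.inr (Or.inl hS')
        · exact Or.inr (Or.inr hS')
      · exact absurd rfl h'
  · intro hS
    rcases hS with rfl | hS | hS
    · exact S_self hA t mvv h
    · obtain ⟨x', hrel, hS'⟩ := S_down hA hS
      rw [h] at hrel
      rcases hrel with ⟨rfl, -⟩ | ⟨h', he⟩
      · exact hS'
      · exact absurd he (mvv.e ⟨x', h'⟩).2.1
    · obtain ⟨x', hrel, hS'⟩ := S_down hA hS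
      rw [h] at hrel
      rcases hrel with ⟨rfl, -⟩ | ⟨h', he⟩
      · exact hS'
      · exact absurd he (mvv.e ⟨x', h'⟩).2.2

lemma NS_vee_notmem (k : Fin H.m) (mvv : VeeMove (H.C k.val) (H.C (k.val + 1))) :
    k ∉ NS hA (k.val + 1) mvv.result1 ∪ NS hA (k.val + 1) mvv.result2 := by
  classical
  intro hk
  rcases Finset.mem_union.mp hk with h1 | h1 <;>
  · rw [mem_NS] at h1
    have := S_le hA h1
    omega

lemma NS_vee_disj (k : Fin H.m) (mvv : VeeMove (H.C k.val) (H.C (k.val + 1))) :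
    Disjoint (NS hA (k.val + 1) mvv.result1) (NS hA (k.val + 1) mvv.result2) := by
  rw [Finset.disjoint_left]
  intro t h1 h2
  rw [mem_NS] at h1 h2
  exact mvv.result_ne (S_fun hA h1 h2)

lemma NS_vee_card (k : Fin H.m) (mvv : VeeMove (H.C k.val) (H.C (k.val + 1)))
    (h : H.move k = Move.vee mvv) :
    (NS hA k.val mvv.base).card
      = (NS hA (k.val + 1) mvv.result1).card + (NS hA (k.val + 1) mvv.result2).card + 1 := by
  classical
  rw [NS_vee hA k mvv h, Finset.card_insert_of_notMem (NS_vee_notmem hA k mvv),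
    Finset.card_union_of_disjoint (NS_vee_disj hA k mvv)]

lemma moveOK (k : Fin H.m) :
    MoveTwistOK (f hA k.val) (f hA (k.val + 1)) (H.move k) := by
  cases h : H.move k with
  | isotopy mi =>
    simp only [MoveTwistOK]
    intro a
    refine f_pair hA k a (mi.e a) ?_ ?_ ?_
    · intro x' hr
      rw [h] at hr
      exact mi.e.injective hr
    · intro y' hr
      rw [h] at hr
      exact hr.symm
    · intro mv hm
      rw [h] at hm
      cases hm
  | zero mz =>
    simp only [MoveTwistOK]
    constructor
    · rw [f_born hA k mz h]
    · intro a
      refine f_pair hA k a (mz.e a : H.C (k.val + 1)) ?_ ?_ ?_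
      · intro x' hr
        rw [h] at hr
        exact mz.e.injective (Subtype.ext hr)
      · intro y' hr
        rw [h] at hr
        exact hr.symm
      · intro mv hm
        rw [h] at hm
        cases hm
  | wedge mw =>
    simp only [MoveTwistOK]
    refine ⟨?_, ?_, ?_, ?_⟩
    · linarith [one_le_f hA k.val mw.base1]
    · linarith [one_le_f hA k.val mw.base2]
    · have hc := NS_wedge_card hA k mw h
      unfold f
      rw [hc]
      push_cast
      ring
    · intro a ha
      refine f_pair hA k a (mw.e ⟨a, ha⟩ : H.C (k.val + 1)) ?_ ?_ ?_
      · intro x' hr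
        rw [h] at hr
        rcases hr with ⟨-, hy⟩ | ⟨h', he⟩
        · exact absurd hy (mw.e ⟨a, ha⟩).2
        · have hxx := mw.e.injective (Subtype.ext he)
          injection hxx
      · intro y' hr
        rw [h] at hr
        rcases hr with ⟨haa, -⟩ | ⟨h', he⟩
        · rcases haa with hh | hh
          · exact absurd hh ha.1
          · exact absurd hh ha.2
        · exact he.symm
      · intro mv hm
        rw [h] at hm
        cases hm
  | vee mvv =>
    simp only [MoveTwistOK]
    refine ⟨?_, ?_, ?_⟩
    · exact one_le_f hA k.val mvv.base
    · have hc := NS_vee_card hA k mvv h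
      unfold f
      rw [hc]
      push_cast
      ring
    · intro a ha
      refine f_pair hA k a (mvv.e ⟨a, ha⟩ : H.C (k.val + 1)) ?_ ?_ ?_
      · intro x' hr
        rw [h] at hr
        rcases hr with ⟨-, hy⟩ | ⟨h', he⟩
        · rcases hy with hy | hy
          · exact absurd hy (mvv.e ⟨a, ha⟩).2.1
          · exact absurd hy (mvv.e ⟨a, ha⟩).2.2
        · have hxx := mvv.e.injective (Subtype.ext he)
          injection hxx
      · intro y' hr
        rw [h] at hr
        rcases hr with ⟨hh, -⟩ | ⟨h', he⟩
        · exact absurd hh ha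
        · exact he.symm
      · intro mv hm
        rw [h] at hm
        injection hm with hmm
        rw [← hmm]
        exact ha

end TwistAux

/-- If a handle sequence from a knot to a knot satisfies Property A, then it admits a
full and regular twist function `f` with `f(Λ₊) = 1`. -/
theorem exists_full_regular_twist_function_of_propertyA (H : HandleSequence)
    (Λm : H.C 0) (hΛm : ∀ x : H.C 0, x = Λm)
    (Λp : H.C H.m) (hΛp : ∀ x : H.C H.m, x = Λp)
    (hA : PropertyA H) :
    ∃ f : ∀ k, H.C k → ℚ,
      IsTwistFunction H f ∧ IsFullTwist H f ∧ IsRegularTwist H f ∧ f H.m Λp = 1 := by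
  classical
  refine ⟨TwistAux.f hA, ⟨?_, ?_⟩, ⟨?_, ?_⟩, ?_, ?_⟩
  · intro k x
    refine ⟨2 + 4 * (TwistAux.NS hA k x).card, ?_⟩
    unfold TwistAux.f
    push_cast
    ring
  · intro k
    exact TwistAux.moveOK hA k
  · intro k x
    refine ⟨1 + 2 * (TwistAux.NS hA k x).card, ?_⟩
    unfold TwistAux.f
    push_cast
    ring
  · intro k mv hm
    have hmem : k ∈ TwistAux.NS hA k.val mv.base :=
      (TwistAux.mem_NS hA).mpr (TwistAux.S_self hA k mv hm)
    have hpos : 0 < (TwistAux.NS hA k.val mv.base).card :=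
      Finset.card_pos.mpr ⟨k, hmem⟩
    have hq : (1 : ℚ) ≤ ((TwistAux.NS hA k.val mv.base).card : ℚ) := by
      exact_mod_cast hpos
    unfold TwistAux.f
    linarith
  · intro k mv hm
    exact TwistAux.f_born hA k mv hm
  · have hempty : TwistAux.NS hA H.m Λp = ∅ := by
      rw [Finset.eq_empty_iff_forall_notMem]
      intro t ht
      have h1 := TwistAux.S_le hA ((TwistAux.mem_NS hA).mp ht)
      have h2 := t.isLt
      omega
    unfold TwistAux.f
    rw [hempty]
    simp
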